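/- For every σ ∈ S_n, Inv(σ) = Sor(φ(σ)); that is, the inversion set of σ equals the sorting set of φ(σ). -/

import Mathlib

open scoped Classical

namespace SortIdx

variable {n : ℕ}

noncomputable section

/-- The inversion number `inv σ := #{(i,j) : i < j ∧ σ i > σ j}`. -/
def inv (σ : Equiv.Perm (Fin n)) : ℕ :=
  (Finset.univ.filter (fun p : Fin n × Fin n => p.1 < p.2 ∧ σ p.2 < σ p.1)).card

/-- The inversion set `Inv σ := {(i,j) : i < j ∧ σ i > σ j}`. -/
def InvSet (σ : Equiv.Perm (Fin n)) : Finset (Fin n × Fin n) :=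
  Finset.univ.filter (fun p : Fin n × Fin n => p.1 < p.2 ∧ σ p.2 < σ p.1)

/-- Right-to-left minimum letters. -/
def RmilSet (σ : Equiv.Perm (Fin n)) : Finset (Fin n) :=
  (Finset.univ.filter (fun i => ∀ j, i < j → σ i < σ j)).image σ

/-- The number of right-to-left minima. -/
def rmin (σ : Equiv.Perm (Fin n)) : ℕ := (RmilSet σ).card

/-- Right-to-left minimum places. -/
def RmipSet (σ : Equiv.Perm (Fin n)) : Finset (Fin n) :=
  Finset.univ.filter (fun i => ∀ j, i < j → σ i < σ j)

/-- Right-to-left maximum letters. -/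
def RmalSet (σ : Equiv.Perm (Fin n)) : Finset (Fin n) :=
  (Finset.univ.filter (fun i => ∀ j, i < j → σ j < σ i)).image σ

/-- The number of right-to-left maxima. -/
def rmax (σ : Equiv.Perm (Fin n)) : ℕ := (RmalSet σ).card

/-- Left-to-right minimum letters. -/
def LmilSet (σ : Equiv.Perm (Fin n)) : Finset (Fin n) :=
  (Finset.univ.filter (fun i => ∀ j, j < i → σ i < σ j)).image σ

/-- The number of left-to-right minima. -/
def lmin (σ : Equiv.Perm (Fin n)) : ℕ := (LmilSet σ).card

/-- Left-to-right minimum places. -/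
def LmipSet (σ : Equiv.Perm (Fin n)) : Finset (Fin n) :=
  Finset.univ.filter (fun i => ∀ j, j < i → σ i < σ j)

/-- Left-to-right maximum letters. -/
def LmalSet (σ : Equiv.Perm (Fin n)) : Finset (Fin n) :=
  (Finset.univ.filter (fun i => ∀ j, j < i → σ j < σ i)).image σ

/-- The number of left-to-right maxima. -/
def lmax (σ : Equiv.Perm (Fin n)) : ℕ := (LmalSet σ).card

/-- Left-to-right maximum places. -/
def LmapSet (σ : Equiv.Perm (Fin n)) : Finset (Fin n) :=
  Finset.univ.filter (fun i => ∀ j, j < i → σ j < σ i)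

/-- `Cyc σ`: the set of smallest elements of the cycles of `σ`
(`i` is smallest in its cycle iff `i ≤ σ^k i` for all `k`). -/
def CycSet (σ : Equiv.Perm (Fin n)) : Finset (Fin n) :=
  Finset.univ.filter (fun i => ∀ k : ℕ, i ≤ (σ ^ k) i)

/-- The number of cycles of `σ` (fixed points included). -/
def cyc (σ : Equiv.Perm (Fin n)) : ℕ := (CycSet σ).card

/-- One step of the sorting process computing the sorting index: repeatedly
put the largest not-yet-fixed letter `j` in its place by the transposition
`(i j)` where `i = σ⁻¹ j` is the place of the letter `j`, recording the
distance `j - i`.  This produces the unique factorization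
`σ = (i₁ j₁)(i₂ j₂)⋯(i_k j_k)` with `j₁ < ⋯ < j_k`, `i_r < j_r`, and sums
the `j_r - i_r`.  The fuel `n` is always sufficient. -/
def sorAux : ℕ → Equiv.Perm (Fin n) → ℕ
  | 0, _ => 0
  | (fuel + 1), σ =>
    if h : σ.support.Nonempty then
      (((σ.support.max' h : Fin n) : ℕ) - ((σ⁻¹ (σ.support.max' h) : Fin n) : ℕ)) +
        sorAux fuel (σ * Equiv.swap (σ⁻¹ (σ.support.max' h)) (σ.support.max' h))
    else 0

/-- The sorting index of Petersen. -/
def sor (σ : Equiv.Perm (Fin n)) : ℕ := sorAux n σ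

theorem bcode_exists (σ : Equiv.Perm (Fin n)) (i : Fin n) :
    ∃ k : ℕ, 0 < k ∧ (σ⁻¹ ^ k) i ≤ i := by
  refine ⟨orderOf σ⁻¹, orderOf_pos σ⁻¹, ?_⟩
  rw [pow_orderOf_eq_one]
  simp

/-- The `B`-code of `σ`: `Bcode σ i = σ^(-k) i` where `k ≥ 1` is minimal with
`σ^(-k) i ≤ i`. -/
def Bcode (σ : Equiv.Perm (Fin n)) (i : Fin n) : Fin n :=
  (σ⁻¹ ^ (Nat.find (bcode_exists σ i))) i

/-- The `B`-code as a sequence in `L_n` (1-indexed values: the entry at place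
`i` is the 1-indexed name of the letter `Bcode σ i`). -/
def BcodeNat (σ : Equiv.Perm (Fin n)) : Fin n → ℕ :=
  fun i => ((Bcode σ i : Fin n) : ℕ) + 1

/-- The Lehmer code: `Leh σ i = #{j : j ≤ i ∧ σ j ≤ σ i}` (1-indexed values). -/
def Leh (σ : Equiv.Perm (Fin n)) : Fin n → ℕ :=
  fun i => (Finset.univ.filter (fun j => j ≤ i ∧ σ j ≤ σ i)).card

/-- The `A`-code: `A σ := Leh σ⁻¹`. -/
def Acode (σ : Equiv.Perm (Fin n)) : Fin n → ℕ := Leh σ⁻¹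

/-- `O(code) := {i : code i = 1}` (for `1`-indexed codes in `L_n`). -/
def Oset (code : Fin n → ℕ) : Finset (Fin n) :=
  Finset.univ.filter (fun i => code i = 1)

/-- `Lmic1 σ := O(B σ)`, the set of places where the `B`-code equals `1`,
equivalently the left-to-right minima of the shifted cycle containing `1`. -/
def Lmic1Set (σ : Equiv.Perm (Fin n)) : Finset (Fin n) :=
  Oset (BcodeNat σ)

/-- `lmic1 σ := #{i : (B σ)_i = 1}`. -/
def lmic1 (σ : Equiv.Perm (Fin n)) : ℕ := (Lmic1Set σ).card

/-- The bijection `φ = B⁻¹ ∘ A` of Foata–Han. -/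
def phi (σ : Equiv.Perm (Fin n)) : Equiv.Perm (Fin n) :=
  Function.invFun BcodeNat (Acode σ)

/-- The algorithm computing the induced set of a code: the list argument is
the list of places still to process (from the last to the first), `S` is the
set of letters still available.  At place `i` we pick the `(code i)`-th
smallest element `l` of `S` (1-indexed), put the pairs `(l, j)` for `j ∈ S`,
`j > l` into the answer and remove `l` from `S`. -/
def inducedAux : List (Fin n) → Finset (Fin n) → (Fin n → ℕ) → Finset (Fin n × Fin n)
  | [], _, _ => ∅
  | (i :: is), S, code =>
      ((S.filter (fun j => (S.sort (· ≤ ·)).getD (code i - 1) i < j)).image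
          (fun j => ((S.sort (· ≤ ·)).getD (code i - 1) i, j))) ∪
        inducedAux is (S.erase ((S.sort (· ≤ ·)).getD (code i - 1) i)) code

/-- The induced set `⟨code⟩` of a code in `L_n`. -/
def induced (code : Fin n → ℕ) : Finset (Fin n × Fin n) :=
  inducedAux (List.finRange n).reverse Finset.univ code

/-- The sorting set `Sor σ := ⟨B σ⟩`. -/
def SorSet (σ : Equiv.Perm (Fin n)) : Finset (Fin n × Fin n) :=
  induced (BcodeNat σ)

/-- The descent set (as a set of places `i`, `0`-indexed, such that
`σ i > σ (i+1)`). -/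
def DesSet (σ : Equiv.Perm (Fin n)) : Finset (Fin n) :=
  Finset.univ.filter (fun i => ∃ h : (i : ℕ) + 1 < n, σ ⟨(i : ℕ) + 1, h⟩ < σ i)

/-- The major index (descents being counted `1`-indexed). -/
def maj (σ : Equiv.Perm (Fin n)) : ℕ :=
  ∑ i ∈ DesSet σ, ((i : ℕ) + 1)

/-- The charge `chg σ := ∑_{i ∈ Des σ⁻¹} (n - i)` (descents `1`-indexed). -/
def chg (σ : Equiv.Perm (Fin n)) : ℕ :=
  ∑ i ∈ DesSet σ⁻¹, (n - ((i : ℕ) + 1))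

/-- The reverse-complement of `σ` : `τ i = n + 1 - σ (n + 1 - i)` (1-indexed). -/
def revcomp (σ : Equiv.Perm (Fin n)) : Equiv.Perm (Fin n) :=
  Fin.revPerm * σ * Fin.revPerm

/-- The reverse major index `rmaj σ := maj (revcomp σ)`. -/
def rmaj (σ : Equiv.Perm (Fin n)) : ℕ := maj (revcomp σ)

end

end SortIdx

theorem Equiv.Perm.apply_inv_self {α : Type*} (f : Equiv.Perm α) (x : α) : f (f⁻¹ x) = x :=
  Equiv.apply_symm_apply f x

theorem Equiv.Perm.inv_apply_self {α : Type*} (f : Equiv.Perm α) (x : α) : f⁻¹ (f x) = x :=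
  Equiv.symm_apply_apply f x

namespace SortIdxAux

open SortIdx Equiv

variable {n : ℕ}

-- ## rank lemma
theorem sorted_getD_rank {α : Type*} [LinearOrder α] :
    ∀ (L : List α), L.Pairwise (· < ·) → ∀ x ∈ L, ∀ d : α,
      L.getD ((L.filter (fun y => y ≤ x)).length - 1) d = x := by
  intro L
  induction L with
  | nil => intro _ x hx; simp at hx
  | cons a L ih =>
    intro hs x hx d
    have hsL : L.Pairwise (· < ·) := hs.of_cons
    rcases List.mem_cons.1 hx with rfl | hxL
    · have hnone : ∀ y ∈ L, ¬ (y ≤ x) := by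
        intro y hy
        exact not_le.2 (List.rel_of_pairwise_cons hs hy)
      have : L.filter (fun y => decide (y ≤ x)) = [] := by
        apply List.filter_eq_nil_iff.2
        intro y hy
        simpa using hnone y hy
      simp [List.filter_cons, this]
    · have hax : a ≤ x := le_of_lt (List.rel_of_pairwise_cons hs hxL)
      have hpos : 0 < (L.filter (fun y => decide (y ≤ x))).length := by
        apply List.length_pos_iff.2
        intro h
        have := (List.filter_eq_nil_iff.1 h) x hxL
        simp [hax] at this
      have := ih hsL x hxL d
      simp only [List.filter_cons, hax, decide_true, if_true]
      simp only [List.length_cons]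
      rw [Nat.add_sub_cancel]
      rw [show (L.filter (fun y => decide (y ≤ x))).length
          = ((L.filter (fun y => decide (y ≤ x))).length - 1) + 1 from (Nat.succ_pred_eq_of_pos hpos).symm]
      simpa using this

theorem filter_card_eq_length {α : Type*} [LinearOrder α] (S : Finset α) (p : α → Prop)
    [DecidablePred p] :
    (S.filter p).card = ((S.sort (· ≤ ·)).filter (fun y => p y)).length := by
  have : (((S.sort (· ≤ ·)).filter (fun y => p y) : List α) : Multiset α)
      = (S.filter p).val := by
    rw [← Multiset.filter_coe, Finset.sort_eq, Finset.filter_val]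
  calc (S.filter p).card = Multiset.card (S.filter p).val := rfl
    _ = _ := by rw [← this, Multiset.coe_card]

theorem finset_getD_rank {α : Type*} [LinearOrder α] (S : Finset α) (x : α) (hx : x ∈ S) (d : α) :
    (S.sort (· ≤ ·)).getD ((S.filter (fun y => y ≤ x)).card - 1) d = x := by
  rw [filter_card_eq_length]
  exact sorted_getD_rank _ ((Finset.sortedLT_sort S).pairwise) x ((Finset.mem_sort _).2 hx) d

-- ## Bcode basics
theorem bcode_eq (σ : Perm (Fin n)) (i b : Fin n) (k : ℕ) (hk : 0 < k)
    (h1 : ((σ⁻¹ : Perm (Fin n)) ^ k) i = b) (hb : b ≤ i)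
    (hmin : ∀ t, 0 < t → t < k → i < ((σ⁻¹ : Perm (Fin n)) ^ t) i) :
    Bcode σ i = b := by
  have : Nat.find (bcode_exists σ i) = k := by
    rw [Nat.find_eq_iff]
    constructor
    · exact ⟨hk, by rw [h1]; exact hb⟩
    · intro t ht
      rintro ⟨ht0, htle⟩
      exact absurd htle (not_le.2 (hmin t ht0 ht))
  rw [Bcode, this, h1]

theorem bcode_le (σ : Perm (Fin n)) (i : Fin n) : Bcode σ i ≤ i :=
  (Nat.find_spec (bcode_exists σ i)).2

theorem bcode_fixed (σ : Perm (Fin n)) (i : Fin n) (h : σ i = i) : Bcode σ i = i := by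
  apply bcode_eq σ i i 1 one_pos
  · simp [Equiv.Perm.inv_eq_iff_eq.2 h.symm, h]
  · exact le_refl i
  · intro t ht0 ht1; omega

theorem apply_le_of_fix (σ : Perm (Fin n)) (M : Fin n) (hfix : ∀ j, M < j → σ j = j)
    (x : Fin n) (hx : x ≤ M) : σ⁻¹ x ≤ M := by
  by_contra h
  have := hfix _ (not_le.1 h)
  have : x = σ⁻¹ x := by
    conv_lhs => rw [← Equiv.Perm.apply_inv_self σ x]
    rw [this]
  omega

end SortIdxAux
namespace SortIdxAux

open SortIdx Equiv

variable {n : ℕ}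

theorem bcode_skip (σ : Perm (Fin n)) (M : Fin n) (hfix : ∀ j, M < j → σ j = j)
    (i : Fin n) (hi : i < M) :
    Bcode (σ * Equiv.swap (σ⁻¹ M) M) i = Bcode σ i := by
  set a := σ⁻¹ M with ha_def
  by_cases ha : a = M
  · rw [ha, Equiv.swap_self]
    simp [mul_one, ← Equiv.Perm.one_def]
  -- a < M
  have haM : a < M := lt_of_le_of_ne (apply_le_of_fix σ M hfix M (le_refl M)) ha
  set σ' := σ * Equiv.swap a M with hσ'
  have hσ'inv : σ'⁻¹ = Equiv.swap a M * σ⁻¹ := by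
    rw [hσ', mul_inv_rev, Equiv.swap_inv]
  have hσM : σ M ≠ M := by
    intro h
    apply ha
    rw [ha_def, Equiv.Perm.inv_eq_iff_eq.2 h.symm]
  have hτ1 : σ'⁻¹ M = M := by
    rw [hσ'inv, Equiv.Perm.mul_apply, ← ha_def, Equiv.swap_apply_left]
  have hτ2 : σ'⁻¹ (σ M) = a := by
    rw [hσ'inv, Equiv.Perm.mul_apply, Equiv.Perm.inv_apply_self, Equiv.swap_apply_right]
  have hτ3 : ∀ x, x ≠ M → x ≠ σ M → σ'⁻¹ x = σ⁻¹ x := by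
    intro x h1 h2
    rw [hσ'inv, Equiv.Perm.mul_apply]
    apply Equiv.swap_apply_of_ne_of_ne
    · rw [ha_def]; exact fun h => h1 ((σ⁻¹).injective h)
    · exact fun h => h2 (by rw [← h, Equiv.Perm.apply_inv_self])
  set x : ℕ → Fin n := fun t => ((σ⁻¹ : Perm (Fin n)) ^ t) i with hx_def
  have hxs : ∀ t, x (t + 1) = σ⁻¹ (x t) := by
    intro t
    simp only [hx_def, pow_succ, Equiv.Perm.mul_apply]
    rw [← Equiv.Perm.mul_apply, ← pow_succ, pow_succ', Equiv.Perm.mul_apply]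
  have hxle : ∀ t, x t ≤ M := by
    intro t
    induction t with
    | zero => simpa [hx_def, Equiv.Perm.one_symm] using le_of_lt hi
    | succ t ih => rw [hxs]; exact apply_le_of_fix σ M hfix _ ih
  set k := Nat.find (bcode_exists σ i) with hk_def
  have hk0 : 0 < k := (Nat.find_spec (bcode_exists σ i)).1
  have hkle : x k ≤ i := (Nat.find_spec (bcode_exists σ i)).2
  have hmin : ∀ t, 0 < t → t < k → i < x t := by
    intro t ht0 htk
    have := Nat.find_min (bcode_exists σ i) htk
    push_neg at this
    exact this ht0
  have hbc : Bcode σ i = x k := rfl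
  have huniq : ∀ s t, s < t → t - s < k → x s = x t → False := by
    intro s t hst htk h
    have key : x (s + (t - s)) = ((σ⁻¹ : Perm (Fin n)) ^ s) (x (t - s)) := by
      simp only [hx_def, ← Equiv.Perm.mul_apply, ← pow_add]
    rw [show s + (t - s) = t from by omega] at key
    have h2 : ((σ⁻¹ : Perm (Fin n)) ^ s) i = ((σ⁻¹ : Perm (Fin n)) ^ s) (x (t - s)) := by
      rw [← key, ← h]
    have h3 : i = x (t - s) := (Equiv.injective _) h2
    have := hmin (t - s) (by omega) htk
    rw [← h3] at this
    exact absurd this (lt_irrefl i)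
  -- occurrences of M
  by_cases hM : ∃ s, 1 ≤ s ∧ s ≤ k - 1 ∧ x s = M
  · obtain ⟨s, hs1, hs2, hsM⟩ := hM
    have hk2 : 2 ≤ k := by omega
    have hxkM : x k ≠ M := by
      intro h; rw [h] at hkle; omega
    have hMuniq : ∀ t, 1 ≤ t → t ≤ k → x t = M → t = s := by
      intro t ht1 htk h
      by_contra hne
      have htk' : t ≠ k := by intro h'; rw [h'] at h; exact hxkM h
      rcases lt_or_gt_of_ne hne with h' | h'
      · exact huniq t s h' (by omega) (h.trans hsM.symm)
      · exact huniq s t h' (by omega) (hsM.trans h.symm)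
    have hsσM : x (s - 1) = σ M := by
      have h1 : σ⁻¹ (x (s - 1)) = M := by
        rw [← hxs, show s - 1 + 1 = s from by omega, hsM]
      rw [← h1, Equiv.Perm.apply_inv_self]
    have hy : ∀ t, t ≤ k - 1 → ((σ'⁻¹ : Perm (Fin n)) ^ t) i = if t < s then x t else x (t + 1) := by
      intro t
      induction t with
      | zero =>
        intro _
        rw [if_pos (by omega : (0:ℕ) < s)]
        simp [hx_def, Equiv.Perm.one_symm]
      | succ t ih =>
        intro ht
        have iht := ih (by omega)
        have step : ((σ'⁻¹ : Perm (Fin n)) ^ (t+1)) i = σ'⁻¹ (((σ'⁻¹ : Perm (Fin n)) ^ t) i) := by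
          rw [pow_succ', Equiv.Perm.mul_apply]
        rw [step, iht]
        by_cases h1 : t + 1 < s
        · -- t < s - 1
          rw [if_pos (by omega), if_pos h1]
          have hxtM : x t ≠ M := by
            intro h
            have ht0 : t ≠ 0 := by
              intro h0; rw [h0] at h; simp [hx_def, Equiv.Perm.one_symm] at h; rw [h] at hi; omega
            have := hMuniq t (by omega) (by omega) h
            omega
          have hxtσM : x t ≠ σ M := by
            intro h
            have : x (t + 1) = M := by rw [hxs, h, Equiv.Perm.inv_apply_self]
            have := hMuniq (t+1) (by omega) (by omega) this
            omega
          rw [hτ3 _ hxtM hxtσM, ← hxs]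
        by_cases h2 : t + 1 = s
        · -- pivot step
          rw [if_pos (by omega), if_neg (by omega)]
          have : x t = σ M := by
            have : x (s - 1) = x t := by congr 1; omega
            rw [← this, hsσM]
          rw [this, hτ2, ha_def]
          have : x (s + 1) = σ⁻¹ M := by rw [hxs, hsM]
          rw [← this]
          congr 1
          omega
        · -- t ≥ s
          rw [if_neg (by omega), if_neg (by omega)]
          have hs_lt : s < t + 1 := by omega
          have hxtM : x (t+1) ≠ M := by
            intro h
            have := hMuniq (t+1) (by omega) (by omega) h
            omega
          have hxtσM : x (t+1) ≠ σ M := by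
            intro h
            have hM2 : x (t + 2) = M := by rw [show t+2 = (t+1)+1 from rfl, hxs, h, Equiv.Perm.inv_apply_self]
            have := hMuniq (t+2) (by omega) (by omega) hM2
            omega
          rw [hτ3 _ hxtM hxtσM, ← hxs]
    rw [hbc]
    apply bcode_eq σ' i (x k) (k - 1) (by omega)
    · rw [hy (k-1) (le_refl _), if_neg (by omega)]
      congr 1
      omega
    · exact hkle
    · intro t ht0 htk
      rw [hy t (by omega)]
      by_cases h : t < s
      · rw [if_pos h]; exact hmin t ht0 (by omega)
      · rw [if_neg h]; exact hmin (t+1) (by omega) (by omega)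
  · push_neg at hM
    have hy : ∀ t, t ≤ k → ((σ'⁻¹ : Perm (Fin n)) ^ t) i = x t := by
      intro t
      induction t with
      | zero => intro _; simp [hx_def, Equiv.Perm.one_symm]
      | succ t ih =>
        intro ht
        have step : ((σ'⁻¹ : Perm (Fin n)) ^ (t+1)) i = σ'⁻¹ (((σ'⁻¹ : Perm (Fin n)) ^ t) i) := by
          rw [pow_succ', Equiv.Perm.mul_apply]
        rw [step, ih (by omega)]
        have hxtM : x t ≠ M := by
          intro h
          rcases Nat.eq_zero_or_pos t with h0 | h0
          · rw [h0] at h; simp [hx_def, Equiv.Perm.one_symm] at h; rw [h] at hi; omega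
          · exact absurd h (hM t h0 (by omega))
        have hxtσM : x t ≠ σ M := by
          intro h
          have hM2 : x (t + 1) = M := by rw [hxs, h, Equiv.Perm.inv_apply_self]
          rcases Nat.lt_or_ge (t+1) k with h' | h'
          · exact absurd hM2 (hM (t+1) (by omega) (by omega))
          · have : t + 1 = k := by omega
            rw [this] at hM2
            rw [hM2] at hkle
            omega
        rw [hτ3 _ hxtM hxtσM, ← hxs]
    rw [hbc]
    apply bcode_eq σ' i (x k) k hk0
    · exact hy k (le_refl _)
    · exact hkle
    · intro t ht0 htk
      rw [hy t (by omega)]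
      exact hmin t ht0 htk

end SortIdxAux
namespace SortIdxAux

open SortIdx Equiv

variable {n : ℕ}

noncomputable def build (c : Fin n → Fin n) : ℕ → Perm (Fin n)
  | 0 => 1
  | m + 1 => if h : m < n then build c m * Equiv.swap (c ⟨m, h⟩) ⟨m, h⟩ else build c m

theorem build_spec (c : Fin n → Fin n) (hc : ∀ i, c i ≤ i) :
    ∀ m : ℕ, (∀ j : Fin n, m ≤ (j : ℕ) → build c m j = j) ∧
      (∀ i : Fin n, (i : ℕ) < m → Bcode (build c m) i = c i) := by
  intro m
  induction m with
  | zero =>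
    refine ⟨fun j _ => rfl, fun i hi => absurd hi (by omega)⟩
  | succ m ih =>
    by_cases h : m < n
    · have hb : build c (m + 1) = build c m * Equiv.swap (c ⟨m, h⟩) ⟨m, h⟩ := by
        rw [build, dif_pos h]
      set M : Fin n := ⟨m, h⟩ with hM
      have hMval : (M : ℕ) = m := rfl
      have hcM : (c M : ℕ) ≤ m := by
        have := hc M; rw [Fin.le_def, hMval] at this; exact this
      have hfix' : ∀ j : Fin n, M < j → build c (m+1) j = j := by
        intro j hj
        have hj' : m < (j : ℕ) := by rw [Fin.lt_def, hMval] at hj; exact hj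
        rw [hb, Equiv.Perm.mul_apply, Equiv.swap_apply_of_ne_of_ne]
        · exact ih.1 j (by omega)
        · intro he; rw [he] at hj'; omega
        · intro he; rw [he, hMval] at hj'; omega
      have hinvM : (build c (m+1))⁻¹ M = c M := by
        rw [hb, mul_inv_rev, Equiv.Perm.mul_apply, Equiv.swap_inv]
        rw [show ((build c m)⁻¹ : Perm (Fin n)) M = M from ?_, Equiv.swap_apply_right]
        have := ih.1 M (le_refl m)
        exact Equiv.Perm.inv_eq_iff_eq.2 this.symm
      constructor
      · intro j hj
        exact hfix' j (by omega)
      · intro i hi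
        rcases Nat.lt_or_ge (i : ℕ) m with h' | h'
        · -- use skip lemma with σ = build c (m+1)
          have hskip := bcode_skip (build c (m+1)) M hfix' i
            (by rw [Fin.lt_def, hMval]; exact h')
          rw [hinvM] at hskip
          have : build c (m+1) * Equiv.swap (c M) M = build c m := by
            rw [hb, mul_assoc, Equiv.swap_mul_self, mul_one]
          rw [this] at hskip
          rw [← hskip, (ih.2 i h')]
        · -- i = M
          have hiM : i = M := Fin.ext (by rw [hMval]; omega)
          rw [hiM]
          apply bcode_eq _ M (c M) 1 one_pos
          · simpa using hinvM
          · exact hc M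
          · intro t ht0 ht1; omega
    · have hb : build c (m + 1) = build c m := by rw [build, dif_neg h]
      refine ⟨fun j hj => by rw [hb]; exact ih.1 j (by omega), fun i hi => by
        rw [hb]; exact ih.2 i (by omega)⟩

theorem bcodeNat_surj_on (f : Fin n → ℕ) (hf1 : ∀ i, 1 ≤ f i) (hf2 : ∀ i : Fin n, f i ≤ (i : ℕ) + 1) :
    ∃ τ : Perm (Fin n), BcodeNat τ = f := by
  have hlt : ∀ i : Fin n, f i - 1 < n := fun i => by have := hf2 i; have := i.2; omega
  set c : Fin n → Fin n := fun i => ⟨f i - 1, hlt i⟩ with hc_def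
  have hc : ∀ i, c i ≤ i := fun i => by
    have := hf2 i
    simp only [hc_def]
    rw [Fin.le_def]
    simp
    omega
  refine ⟨build c n, ?_⟩
  funext i
  have := (build_spec c hc n).2 i i.2
  rw [BcodeNat, this, hc_def]
  have := hf1 i
  simp
  omega

end SortIdxAux
namespace SortIdxAux

open SortIdx Equiv

variable {n : ℕ}

theorem acode_ge_one (σ : Perm (Fin n)) (i : Fin n) : 1 ≤ Acode σ i := by
  rw [Acode, Leh]
  rw [Nat.one_le_iff_ne_zero, Ne, Finset.card_eq_zero]
  intro h
  have : i ∈ (∅ : Finset (Fin n)) := by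
    rw [← h]
    simp
  simp at this

theorem acode_le (σ : Perm (Fin n)) (i : Fin n) : Acode σ i ≤ (i : ℕ) + 1 := by
  rw [Acode, Leh]
  have hsub : (Finset.univ.filter (fun j => j ≤ i ∧ σ⁻¹ j ≤ σ⁻¹ i)) ⊆ Finset.Iic i := by
    intro j hj
    simp at hj
    simpa using hj.1
  calc _ ≤ (Finset.Iic i).card := Finset.card_le_card hsub
    _ = (i : ℕ) + 1 := by simp

theorem bcodeNat_phi (σ : Perm (Fin n)) : BcodeNat (phi σ) = Acode σ := by
  rw [phi]
  exact Function.invFun_eq (bcodeNat_surj_on (Acode σ) (acode_ge_one σ) (acode_le σ))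

end SortIdxAux
namespace SortIdxAux

open SortIdx Equiv

variable {n : ℕ}

theorem inducedAux_acode (σ : Perm (Fin n)) :
    ∀ m : ℕ, m ≤ n →
      inducedAux (((List.finRange n).take m).reverse)
        (Finset.univ.filter (fun a => (σ a : ℕ) < m)) (Acode σ)
      = Finset.univ.filter
          (fun p : Fin n × Fin n => p.1 < p.2 ∧ σ p.2 < σ p.1 ∧ (σ p.1 : ℕ) < m) := by
  intro m
  induction m with
  | zero =>
    intro _
    simp only [List.take_zero, List.reverse_nil]
    rw [inducedAux]
    ext p
    simp
  | succ m ih =>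
    intro hm
    have h : m < n := by omega
    set M : Fin n := ⟨m, h⟩ with hM
    have hMval : (M : ℕ) = m := rfl
    have hlist : ((List.finRange n).take (m+1)).reverse
        = M :: ((List.finRange n).take m).reverse := by
      rw [List.take_succ]
      have hlen : m < (List.finRange n).length := by simpa using h
      rw [List.getElem?_eq_getElem hlen]
      simp [List.getElem_finRange, hM]
    set S : Finset (Fin n) := Finset.univ.filter (fun a => (σ a : ℕ) < m + 1) with hS
    have hxS : σ⁻¹ M ∈ S := by
      simp only [hS, Finset.mem_filter, Finset.mem_univ, true_and]
      rw [Equiv.Perm.apply_inv_self]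
      omega
    have hcard : Acode σ M = (S.filter (fun y => y ≤ σ⁻¹ M)).card := by
      rw [Acode, Leh, hS, Finset.filter_filter]
      apply Finset.card_bij' (fun j _ => σ⁻¹ j) (fun a _ => σ a)
      · intro j hj
        simp only [Finset.mem_filter, Finset.mem_univ, true_and] at hj ⊢
        obtain ⟨hj1, hj2⟩ := hj
        refine ⟨?_, hj2⟩
        rw [Equiv.Perm.apply_inv_self]
        rw [Fin.le_def, hMval] at hj1
        omega
      · intro a ha
        simp only [Finset.mem_filter, Finset.mem_univ, true_and] at ha ⊢
        obtain ⟨ha1, ha2⟩ := ha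
        constructor
        · rw [Fin.le_def, hMval]
          omega
        · rw [Equiv.Perm.inv_apply_self]
          exact ha2
      · intro j _; rw [Equiv.Perm.apply_inv_self]
      · intro a _; rw [Equiv.Perm.inv_apply_self]
    have hrank : (S.sort (· ≤ ·)).getD (Acode σ M - 1) M = σ⁻¹ M := by
      rw [hcard]
      exact finset_getD_rank S (σ⁻¹ M) hxS M
    have herase : S.erase (σ⁻¹ M) = Finset.univ.filter (fun a => (σ a : ℕ) < m) := by
      ext a
      simp only [Finset.mem_erase, hS, Finset.mem_filter, Finset.mem_univ, true_and]
      constructor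
      · rintro ⟨hne, hlt⟩
        have : σ a ≠ M := fun he => hne (by rw [← he, Equiv.Perm.inv_apply_self])
        have : (σ a : ℕ) ≠ m := fun he => this (Fin.ext (by rw [hMval]; exact he))
        omega
      · intro hlt
        refine ⟨fun he => ?_, by omega⟩
        rw [he, Equiv.Perm.apply_inv_self] at hlt
        rw [hMval] at hlt
        omega
    have himage : ((S.filter (fun j => σ⁻¹ M < j)).image (fun j => (σ⁻¹ M, j)))
        = Finset.univ.filter
          (fun p : Fin n × Fin n => p.1 < p.2 ∧ σ p.2 < σ p.1 ∧ (σ p.1 : ℕ) = m) := by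
      ext p
      simp only [Finset.mem_image, Finset.mem_filter, Finset.mem_univ, true_and, hS]
      constructor
      · rintro ⟨j, ⟨⟨hjlt, hjgt⟩, hpe⟩⟩
        rw [← hpe]
        dsimp only
        have hne : j ≠ σ⁻¹ M := ne_of_gt hjgt
        have hσj : σ j ≠ M := fun he => hne (by rw [← he, Equiv.Perm.inv_apply_self])
        have hσj' : (σ j : ℕ) ≠ m := fun he => hσj (Fin.ext (by rw [hMval]; exact he))
        refine ⟨hjgt, ?_, ?_⟩
        · rw [Fin.lt_def, Equiv.Perm.apply_inv_self, hMval]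
          omega
        · rw [Equiv.Perm.apply_inv_self, hMval]
      · rintro ⟨h1, h2, h3⟩
        have hσp1 : σ p.1 = M := Fin.ext (by rw [hMval]; exact h3)
        have hp1 : p.1 = σ⁻¹ M := by rw [← hσp1, Equiv.Perm.inv_apply_self]
        refine ⟨p.2, ⟨⟨?_, ?_⟩, ?_⟩⟩
        · rw [hσp1] at h2
          rw [Fin.lt_def, hMval] at h2
          omega
        · rw [← hp1]; exact h1
        · rw [← hp1]
    rw [hlist, inducedAux, hrank, herase, himage, ih (by omega)]
    ext p
    simp only [Finset.mem_union, Finset.mem_filter, Finset.mem_univ, true_and]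
    constructor
    · rintro (⟨h1, h2, h3⟩ | ⟨h1, h2, h3⟩)
      · exact ⟨h1, h2, by omega⟩
      · exact ⟨h1, h2, by omega⟩
    · rintro ⟨h1, h2, h3⟩
      rcases Nat.lt_or_ge (σ p.1 : ℕ) m with h' | h'
      · exact Or.inr ⟨h1, h2, h'⟩
      · exact Or.inl ⟨h1, h2, by omega⟩

theorem induced_acode (σ : Perm (Fin n)) : induced (Acode σ) = InvSet σ := by
  rw [induced, InvSet]
  have h1 : (List.finRange n).reverse = ((List.finRange n).take n).reverse := by
    rw [List.take_of_length_le (by simp)]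
  have h2 : (Finset.univ : Finset (Fin n)) = Finset.univ.filter (fun a => (σ a : ℕ) < n) := by
    ext a; simp [Fin.is_lt]
  rw [h1, h2, inducedAux_acode σ n (le_refl n)]
  ext p
  simp [Fin.is_lt]

end SortIdxAux


/-- Lemma 2.5.  `Inv σ = Sor (φ σ)`. -/
theorem invSet_eq_sorSet_phi (n : ℕ) (σ : Equiv.Perm (Fin n)) :
    SortIdx.InvSet σ = SortIdx.SorSet (SortIdx.phi σ) := by
  rw [SortIdx.SorSet, SortIdxAux.bcodeNat_phi, SortIdxAux.induced_acode]
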